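/- arXiv:2309.14263 — 5 statements merged into one kernel-verified Lean document; each statement's English description precedes it below -/
import Mathlib

section
/- If a linear system (C,A) with observability matrix O = [C; CA; ...; CA^{n-1}] satisfies rank([O; F]) = rank(O) for a functional matrix F, then the dual system with controllability matrix O^T satisfies rank(F·O^T) = rank(F). -/
open Matrix

lemma rank_eq_of_ker_eq' {a b c : Type*} [Fintype a] [Fintype b] [Fintype c]
    (M : Matrix a b ℝ) (N : Matrix c b ℝ)
    (h : LinearMap.ker M.mulVecLin = LinearMap.ker N.mulVecLin) : M.rank = N.rank := by
  have h1 := LinearMap.finrank_range_add_finrank_ker M.mulVecLin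
  have h2 := LinearMap.finrank_range_add_finrank_ker N.mulVecLin
  rw [h] at h1
  rw [Matrix.rank, Matrix.rank]
  omega

/-- Weak duality: functional observability of (C,A;F) implies
output controllability of the dual (Aᵀ,Cᵀ;F). -/
theorem weak_duality_rank (n q r : ℕ)
    (A : Matrix (Fin n) (Fin n) ℝ) (C : Matrix (Fin q) (Fin n) ℝ)
    (F : Matrix (Fin r) (Fin n) ℝ)
    (O : Matrix (Fin n × Fin q) (Fin n) ℝ)
    (hO : O = Matrix.of fun p j => (C * A ^ (p.1 : ℕ)) p.2 j)
    (hobs : (Matrix.fromRows O F).rank = O.rank) :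
    (F * Oᵀ).rank = F.rank := by
  classical
  -- transpose ranks
  have hT : (Matrix.fromCols Oᵀ Fᵀ).rank = Oᵀ.rank := by
    rw [← Matrix.transpose_fromRows, Matrix.rank_transpose, Matrix.rank_transpose, hobs]
  -- range O^T ≤ range of fromColumns
  set G := Matrix.fromCols Oᵀ Fᵀ with hG
  have hle : LinearMap.range Oᵀ.mulVecLin ≤ LinearMap.range G.mulVecLin := by
    rintro _ ⟨v, rfl⟩
    exact ⟨Sum.elim v 0, by simp [hG, Matrix.mulVec_transpose]⟩
  have hFle : LinearMap.range Fᵀ.mulVecLin ≤ LinearMap.range G.mulVecLin := by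
    rintro _ ⟨v, rfl⟩
    exact ⟨Sum.elim 0 v, by simp [hG, Matrix.mulVec_transpose]⟩
  have heq : LinearMap.range Oᵀ.mulVecLin = LinearMap.range G.mulVecLin :=
    Submodule.eq_of_le_of_finrank_eq hle hT.symm
  have hFO : LinearMap.range Fᵀ.mulVecLin ≤ LinearMap.range Oᵀ.mulVecLin := heq ▸ hFle
  -- extract X with Fᵀ = Oᵀ * X
  choose x hx using fun i : Fin r => hFO ⟨Pi.single i 1, rfl⟩
  set X : Matrix (Fin n × Fin q) (Fin r) ℝ := Matrix.of fun j i => x i j with hX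
  have hfact : Fᵀ = Oᵀ * X := by
    ext j i
    have h := congrFun (hx i) j
    simp only [Matrix.mulVecLin_apply, Matrix.mulVec_single, mul_one] at h
    have h2 : (Oᵀ * X) j i = (Oᵀ *ᵥ x i) j := by
      simp [Matrix.mul_apply, Matrix.mulVec, dotProduct, hX]
    rw [h2, h]
    simp
  have hOO : LinearMap.ker (O * Oᵀ).mulVecLin = LinearMap.ker Oᵀ.mulVecLin := by
    have h := Matrix.ker_mulVecLin_transpose_mul_self Oᵀ
    rwa [Matrix.transpose_transpose] at h
  have key : ∀ w, (O * Oᵀ) *ᵥ w = 0 ↔ Oᵀ *ᵥ w = 0 := fun w => by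
    simpa only [LinearMap.mem_ker, Matrix.mulVecLin_apply] using SetLike.ext_iff.mp hOO w
  have hker : LinearMap.ker (O * Oᵀ * X).mulVecLin = LinearMap.ker (Oᵀ * X).mulVecLin := by
    ext v
    simp only [LinearMap.mem_ker, Matrix.mulVecLin_apply]
    rw [show (O * Oᵀ * X) *ᵥ v = (O * Oᵀ) *ᵥ (X *ᵥ v) from (Matrix.mulVec_mulVec v _ X).symm,
      show (Oᵀ * X) *ᵥ v = Oᵀ *ᵥ (X *ᵥ v) from (Matrix.mulVec_mulVec v _ X).symm]
    exact key _
  have hfin : (O * Oᵀ * X).rank = (Oᵀ * X).rank := rank_eq_of_ker_eq' _ _ hker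
  rw [← Matrix.rank_transpose (F * Oᵀ), Matrix.transpose_mul, Matrix.transpose_transpose,
    hfact, ← Matrix.mul_assoc, hfin, ← hfact, Matrix.rank_transpose]
end

section
/- For real matrices O (m×n) and F (r×n), if rank([O; F]) = rank(O), then rank(F·O^T) = rank(F). -/
open Matrix

lemma range_fromRows_eq {m r n : ℕ} (O : Matrix (Fin m) (Fin n) ℝ)
    (F : Matrix (Fin r) (Fin n) ℝ) :
    Set.range (Matrix.fromRows O F) = Set.range O ∪ Set.range F := by
  ext v
  constructor
  · rintro ⟨i | i, rfl⟩
    · exact Or.inl ⟨i, rfl⟩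
    · exact Or.inr ⟨i, rfl⟩
  · rintro (⟨i, rfl⟩ | ⟨i, rfl⟩)
    · exact ⟨Sum.inl i, rfl⟩
    · exact ⟨Sum.inr i, rfl⟩

/-- If rank([O; F]) = rank(O) then rank(F·Oᵀ) = rank(F). -/
theorem rank_mul_transpose_of_rank_fromRows (m n r : ℕ)
    (O : Matrix (Fin m) (Fin n) ℝ) (F : Matrix (Fin r) (Fin n) ℝ)
    (h : (Matrix.fromRows O F).rank = O.rank) :
    (F * Oᵀ).rank = F.rank := by
  -- Step 1: row space of F is contained in row space of O
  have hspan : Submodule.span ℝ (Set.range F) ≤ Submodule.span ℝ (Set.range O) := by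
    rw [Matrix.rank_eq_finrank_span_row, Matrix.rank_eq_finrank_span_row,
      Matrix.row, Matrix.row, range_fromRows_eq, Submodule.span_union] at h
    have hle : Submodule.span ℝ (Set.range O) ≤
        Submodule.span ℝ (Set.range O) ⊔ Submodule.span ℝ (Set.range F) := le_sup_left
    have heq := Submodule.eq_of_le_of_finrank_le hle (le_of_eq h)
    calc Submodule.span ℝ (Set.range F)
        ≤ Submodule.span ℝ (Set.range O) ⊔ Submodule.span ℝ (Set.range F) := le_sup_right
      _ = Submodule.span ℝ (Set.range O) := heq.symm
  -- Step 2: there is C with F = C * O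
  have hexists : ∀ i : Fin r, ∃ c : Fin m → ℝ, c ᵥ* O = F i := by
    intro i
    have : F i ∈ Submodule.span ℝ (Set.range O) := hspan (Submodule.subset_span ⟨i, rfl⟩)
    change F i ∈ Submodule.span ℝ (Set.range O.row) at this
    rw [← range_vecMulLinear] at this
    obtain ⟨c, hc⟩ := this
    exact ⟨c, hc⟩
  choose c hc using hexists
  set C : Matrix (Fin r) (Fin m) ℝ := Matrix.of c with hC
  have hF : F = C * O := by
    ext i j
    rw [Matrix.mul_apply]
    have := congr_fun (hc i) j
    simpa [hC, Matrix.vecMul, dotProduct] using this.symm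
  -- Step 3: rank inequalities
  refine le_antisymm (Matrix.rank_mul_le_left F Oᵀ) ?_
  calc F.rank = ((C * O) * (C * O)ᵀ).rank := by rw [hF, Matrix.rank_self_mul_transpose]
    _ = ((F * Oᵀ) * Cᵀ).rank := by rw [hF, Matrix.transpose_mul, ← Matrix.mul_assoc]
    _ ≤ (F * Oᵀ).rank := Matrix.rank_mul_le_left _ _
end

section
/- There exist real matrices O and F with rank(F·O^T) = rank(F) but rank([O; F]) > rank(O); hence output controllability of the dual does not imply functional observability. -/
open Matrix

lemma aux_rank_one : (!![(1:ℝ),1] * (!![(1:ℝ),0])ᵀ).rank = (!![(1:ℝ),1]).rank := by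
  have h1 : (!![(1:ℝ),1] * (!![(1:ℝ),0])ᵀ) = (1 : Matrix (Fin 1) (Fin 1) ℝ) := by
    ext i j
    fin_cases i; fin_cases j
    simp [Matrix.mul_apply, Fin.sum_univ_two]
  have hle : (!![(1:ℝ),1]).rank ≤ 1 := by
    simpa using Matrix.rank_le_card_height (!![(1:ℝ),1])
  have hge : 1 ≤ (!![(1:ℝ),1]).rank := by
    have := Matrix.rank_mul_le_left (!![(1:ℝ),1]) ((!![(1:ℝ),0])ᵀ)
    rw [h1, Matrix.rank_one] at this
    simpa using this
  rw [h1, Matrix.rank_one]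
  simp
  omega

/-- A selection matrix turning `Fin 1 ⊕ Fin 1` rows into `Fin 2` rows. -/
noncomputable def selP : Matrix (Fin 2) (Fin 1 ⊕ Fin 1) ℝ :=
  Matrix.of fun i j => if finSumFinEquiv j = i then (1 : ℝ) else 0

lemma selP_mul :
    selP * Matrix.fromRows !![(1:ℝ),0] !![(1:ℝ),1] = !![(1:ℝ),0;1,1] := by
  ext i j
  fin_cases i <;> fin_cases j <;>
    simp [selP, Matrix.mul_apply, Fintype.sum_sum_type, finSumFinEquiv,
      Matrix.fromRows_apply_inl, Matrix.fromRows_apply_inr, Fin.sum_univ_succ] <;> simp [Finset.filter_singleton, Fin.ext_iff]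

/-- Output controllability of the dual does not imply functional
observability: there exist O, F with rank(F·Oᵀ) = rank(F) but
rank([O; F]) > rank(O). -/
theorem exists_output_ctrb_not_funct_obsv :
    ∃ (m n r : ℕ) (O : Matrix (Fin m) (Fin n) ℝ)
      (F : Matrix (Fin r) (Fin n) ℝ),
      (F * Oᵀ).rank = F.rank ∧ (Matrix.fromRows O F).rank > O.rank := by
  refine ⟨1, 2, 1, !![1,0], !![1,1], aux_rank_one, ?_⟩
  have hO : (!![(1:ℝ),0]).rank ≤ 1 := by
    simpa using Matrix.rank_le_card_height (!![(1:ℝ),0])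
  have hdet : IsUnit (!![(1:ℝ),0;1,1]) := by
    rw [Matrix.isUnit_iff_isUnit_det]
    simp [Matrix.det_fin_two]
  have h2 : (!![(1:ℝ),0;1,1]).rank = 2 := by
    rw [Matrix.rank_of_isUnit _ hdet]; simp
  have hle : (!![(1:ℝ),0;1,1]).rank ≤ (Matrix.fromRows !![(1:ℝ),0] !![(1:ℝ),1]).rank := by
    rw [← selP_mul]
    exact Matrix.rank_mul_le_right _ _
  omega
end

section
/- With A = [[A11, 0], [A21, A22]], B = [0; B2], and F = [[F1, 0], [0, F2]] in compatible block form, rank(F·𝒞) = rank(F2·𝒞2) ≤ r − r1, where 𝒞 is the controllability matrix of (A,B), 𝒞2 that of (A22,B2), r is the number of rows of F and r1 the number of rows of F1. In particular, if r1 > 0 (some target node has no path from any driver), then rank(F·𝒞) < rank(F) whenever rank(F) = r. -/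
open Matrix

lemma rank_fromRows_zero {m₁ m₂ : ℕ} {n : Type*} [Fintype n] (M : Matrix (Fin m₂) n ℝ) :
    (Matrix.fromRows (0 : Matrix (Fin m₁) n ℝ) M).rank = M.rank := by
  apply le_antisymm
  · have h : Matrix.fromRows (0 : Matrix (Fin m₁) n ℝ) M =
        Matrix.fromRows (0 : Matrix (Fin m₁) (Fin m₂) ℝ) (1 : Matrix (Fin m₂) (Fin m₂) ℝ) * M := by
      simp
    rw [h]
    exact Matrix.rank_mul_le_right _ _
  · have h : M = Matrix.fromCols (0 : Matrix (Fin m₂) (Fin m₁) ℝ)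
        (1 : Matrix (Fin m₂) (Fin m₂) ℝ) * Matrix.fromRows (0 : Matrix (Fin m₁) n ℝ) M := by
      rw [Matrix.fromCols_mul_fromRows]; simp
    conv_lhs => rw [h]
    exact Matrix.rank_mul_le_right _ _

lemma pow_block_lt {k m : ℕ} (A11 : Matrix (Fin k) (Fin k) ℝ)
    (A21 : Matrix (Fin m) (Fin k) ℝ) (A22 : Matrix (Fin m) (Fin m) ℝ) (j : ℕ) :
    ∃ C, (Matrix.fromBlocks A11 0 A21 A22) ^ j =
      Matrix.fromBlocks (A11 ^ j) 0 C (A22 ^ j) := by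
  induction j with
  | zero => exact ⟨0, by simp [Matrix.fromBlocks_one]⟩
  | succ n ih =>
    obtain ⟨C, hC⟩ := ih
    refine ⟨C * A11 + A22 ^ n * A21, ?_⟩
    rw [pow_succ, pow_succ, pow_succ, hC, Matrix.fromBlocks_multiply]
    simp

/-- Necessity of the path condition: with A block lower triangular,
B = [0; B2] and F = [[F1,0],[0,F2]], rank(F𝒞) = rank(F2·𝒞₂) ≤ r − r1;
if r1 > 0 and F has full row rank then rank(F𝒞) < rank(F). -/
theorem output_ctrb_fails_without_paths (k m p r1 r2 : ℕ)
    (A11 : Matrix (Fin k) (Fin k) ℝ) (A21 : Matrix (Fin m) (Fin k) ℝ)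
    (A22 : Matrix (Fin m) (Fin m) ℝ) (B2 : Matrix (Fin m) (Fin p) ℝ)
    (F1 : Matrix (Fin r1) (Fin k) ℝ) (F2 : Matrix (Fin r2) (Fin m) ℝ)
    (A : Matrix (Fin k ⊕ Fin m) (Fin k ⊕ Fin m) ℝ)
    (hA : A = Matrix.fromBlocks A11 0 A21 A22)
    (B : Matrix (Fin k ⊕ Fin m) (Fin p) ℝ)
    (hB : B = Matrix.fromRows 0 B2)
    (F : Matrix (Fin r1 ⊕ Fin r2) (Fin k ⊕ Fin m) ℝ)
    (hF : F = Matrix.fromBlocks F1 0 0 F2)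
    (𝒞 : Matrix (Fin k ⊕ Fin m) (Fin (k + m) × Fin p) ℝ)
    (h𝒞 : 𝒞 = Matrix.of fun i jc => (A ^ (jc.1 : ℕ) * B) i jc.2)
    (𝒞₂ : Matrix (Fin m) (Fin (k + m) × Fin p) ℝ)
    (h𝒞₂ : 𝒞₂ = Matrix.of fun i jc => (A22 ^ (jc.1 : ℕ) * B2) i jc.2) :
    (F * 𝒞).rank = (F2 * 𝒞₂).rank ∧
    (F * 𝒞).rank ≤ r2 ∧
    (0 < r1 → F.rank = r1 + r2 → (F * 𝒞).rank < F.rank) := by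
  have hAB : ∀ j : ℕ, A ^ j * B = Matrix.fromRows 0 (A22 ^ j * B2) := by
    intro j
    obtain ⟨C, hC⟩ := pow_block_lt A11 A21 A22 j
    rw [hA, hB, hC, Matrix.fromBlocks_mul_fromRows]
    simp
  have h𝒞' : 𝒞 = Matrix.fromRows 0 𝒞₂ := by
    rw [h𝒞, h𝒞₂]
    ext i jc
    rcases i with i | i
    · simp only [Matrix.of_apply, hAB jc.1]; rfl
    · simp only [Matrix.of_apply, hAB jc.1]; rfl
  have hF𝒞 : F * 𝒞 = Matrix.fromRows 0 (F2 * 𝒞₂) := by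
    rw [hF, h𝒞', Matrix.fromBlocks_mul_fromRows, Matrix.mul_zero, Matrix.zero_mul,
      Matrix.zero_mul, add_zero, zero_add]
  have hrank : (F * 𝒞).rank = (F2 * 𝒞₂).rank := by
    rw [hF𝒞]; exact rank_fromRows_zero _
  have hle : (F * 𝒞).rank ≤ r2 := by
    rw [hrank]
    simpa using (F2 * 𝒞₂).rank_le_card_height
  refine ⟨hrank, hle, fun hr1 hFr => ?_⟩
  rw [hFr]
  omega
end

section
/- Let A be an n×n diagonalizable real matrix, B n×p, and F an r×n matrix of full row rank r. If rank(F·𝒞) = rank(F) where 𝒞 is the controllability matrix, then for any target state z* ∈ R^r and any initial state x0, there exists a final state x1 reachable from x0 in finite time with F·x1 = z*. -/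
open Matrix

private lemma exp_entry_cont {n : ℕ} (M : Matrix (Fin n) (Fin n) ℝ) (i j : Fin n) :
    Continuous fun τ : ℝ => NormedSpace.exp (τ • M) i j := by
  letI : SeminormedRing (Matrix (Fin n) (Fin n) ℝ) := Matrix.linftyOpSemiNormedRing
  letI : NormedRing (Matrix (Fin n) (Fin n) ℝ) := Matrix.linftyOpNormedRing
  letI : NormedAlgebra ℝ (Matrix (Fin n) (Fin n) ℝ) := Matrix.linftyOpNormedAlgebra
  letI : NormedAlgebra ℚ (Matrix (Fin n) (Fin n) ℝ) := Matrix.linftyOpNormedAlgebra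
  have h1 : Continuous fun τ : ℝ => NormedSpace.exp (τ • M) :=
    NormedSpace.exp_continuous.comp (continuous_id.smul continuous_const)
  let L : Matrix (Fin n) (Fin n) ℝ →ₗ[ℝ] ℝ :=
    { toFun := fun N => N i j, map_add' := fun _ _ => rfl, map_smul' := fun _ _ => rfl }
  exact (LinearMap.toContinuousLinearMap L).continuous.comp h1

private lemma exp_deriv_aux {n p : ℕ} (M : Matrix (Fin n) (Fin n) ℝ)
    (B' : Matrix (Fin p) (Fin n) ℝ) (v : Fin n → ℝ) (k : ℕ) (τ : ℝ) :
    HasDerivAt (fun τ : ℝ => B' *ᵥ ((M ^ k * NormedSpace.exp (τ • M)) *ᵥ v))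
      (B' *ᵥ ((M ^ (k + 1) * NormedSpace.exp (τ • M)) *ᵥ v)) τ := by
  letI : SeminormedRing (Matrix (Fin n) (Fin n) ℝ) := Matrix.linftyOpSemiNormedRing
  letI : NormedRing (Matrix (Fin n) (Fin n) ℝ) := Matrix.linftyOpNormedRing
  letI : NormedAlgebra ℝ (Matrix (Fin n) (Fin n) ℝ) := Matrix.linftyOpNormedAlgebra
  let L : Matrix (Fin n) (Fin n) ℝ →ₗ[ℝ] (Fin p → ℝ) :=
    { toFun := fun N => B' *ᵥ ((M ^ k * N) *ᵥ v)
      map_add' := fun N₁ N₂ => by simp [mul_add, Matrix.add_mulVec, Matrix.mulVec_add]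
      map_smul' := fun c N => by
        simp [mul_smul_comm, Matrix.smul_mulVec, Matrix.mulVec_smul] }
  have hd := (LinearMap.toContinuousLinearMap L).hasFDerivAt.comp_hasDerivAt
    (f := fun u : ℝ => NormedSpace.exp (u • M)) (x := τ)
    (hasDerivAt_exp_smul_const' M τ)
  have : (LinearMap.toContinuousLinearMap L) (M * NormedSpace.exp (τ • M)) =
      B' *ᵥ ((M ^ (k + 1) * NormedSpace.exp (τ • M)) *ᵥ v) := by
    show B' *ᵥ ((M ^ k * (M * NormedSpace.exp (τ • M))) *ᵥ v) = _
    rw [← mul_assoc, ← pow_succ]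
  exact hd.congr_deriv this

/-- Output controllability implies target-point reachability: if A is
diagonalizable, F has full row rank r and rank(F·𝒞) = rank(F), then any
target value z* can be reached from any initial state. -/
theorem target_reachable_of_output_ctrb (n p r : ℕ)
    (A : Matrix (Fin n) (Fin n) ℝ) (B : Matrix (Fin n) (Fin p) ℝ)
    (F : Matrix (Fin r) (Fin n) ℝ)
    (hdiag : ∃ P D : Matrix (Fin n) (Fin n) ℝ,
      IsUnit P.det ∧ D.IsDiag ∧ A = P * D * P⁻¹)
    (𝒞 : Matrix (Fin n) (Fin n × Fin p) ℝ)
    (h𝒞 : 𝒞 = Matrix.of fun i jc => (A ^ (jc.1 : ℕ) * B) i jc.2)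
    (hrank : (F * 𝒞).rank = F.rank) (hF : F.rank = r) :
    ∀ (zstar : Fin r → ℝ) (x0 : Fin n → ℝ),
      ∃ (t1 : ℝ), 0 < t1 ∧ ∃ u : ℝ → Fin p → ℝ, Continuous u ∧
        ∃ x1 : Fin n → ℝ,
          x1 = (NormedSpace.exp (t1 • A)) *ᵥ x0 +
            ∫ s in (0:ℝ)..t1,
              (NormedSpace.exp ((t1 - s) • A) * B) *ᵥ u s ∧
          F *ᵥ x1 = zstar := by
  intro zstar x0
  classical
  have hsub : Continuous fun s : ℝ => (1:ℝ) - s := continuous_const.sub continuous_id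
  set uu : (Fin r → ℝ) → ℝ → Fin p → ℝ :=
    fun w s => Bᵀ *ᵥ (NormedSpace.exp (((1:ℝ) - s) • Aᵀ) *ᵥ (Fᵀ *ᵥ w)) with huu_def
  set ig : (Fin r → ℝ) → ℝ → Fin n → ℝ :=
    fun w s => (NormedSpace.exp (((1:ℝ) - s) • A) * B) *ᵥ uu w s with hig_def
  have hφcont : ∀ (k : ℕ) (v : Fin n → ℝ),
      Continuous fun τ : ℝ => Bᵀ *ᵥ ((Aᵀ ^ k * NormedSpace.exp (τ • Aᵀ)) *ᵥ v) :=
    fun k v => continuous_iff_continuousAt.mpr fun τ =>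
      (exp_deriv_aux Aᵀ Bᵀ v k τ).continuousAt
  have huu : ∀ w, Continuous (uu w) := by
    intro w
    have hfun : uu w = (fun τ : ℝ =>
        Bᵀ *ᵥ ((Aᵀ ^ 0 * NormedSpace.exp (τ • Aᵀ)) *ᵥ (Fᵀ *ᵥ w))) ∘
        (fun s : ℝ => (1:ℝ) - s) := by
      funext s
      simp [huu_def, pow_zero, one_mul, Function.comp]
    rw [hfun]
    exact (hφcont 0 _).comp hsub
  have hig_cont : ∀ w, Continuous (ig w) := by
    intro w
    apply continuous_pi
    intro i
    have hEB : ∀ j, Continuous fun s : ℝ =>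
        (NormedSpace.exp (((1:ℝ) - s) • A) * B) i j := by
      intro j
      simp only [Matrix.mul_apply]
      exact continuous_finset_sum _ fun m _ =>
        ((exp_entry_cont A i m).comp hsub).mul continuous_const
    simp only [hig_def, Matrix.mulVec, dotProduct]
    exact continuous_finset_sum _ fun j _ =>
      (hEB j).mul ((continuous_apply j).comp (huu w))
  have hii : ∀ w, IntervalIntegrable (ig w) MeasureTheory.volume 0 1 :=
    fun w => (hig_cont w).intervalIntegrable 0 1
  set Y : (Fin r → ℝ) → (Fin n → ℝ) := fun w => ∫ s in (0:ℝ)..1, ig w s with hY_def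
  have hYadd : ∀ w w', Y (w + w') = Y w + Y w' := by
    intro w w'
    have h1 : ∀ s : ℝ, ig (w + w') s = ig w s + ig w' s := by
      intro s
      simp [hig_def, huu_def, Matrix.mulVec_add]
    calc Y (w + w') = ∫ s in (0:ℝ)..1, (ig w s + ig w' s) :=
          intervalIntegral.integral_congr fun s _ => h1 s
      _ = Y w + Y w' := intervalIntegral.integral_add (hii w) (hii w')
  have hYsmul : ∀ (c : ℝ) w, Y (c • w) = c • Y w := by
    intro c w
    have h1 : ∀ s : ℝ, ig (c • w) s = c • ig w s := by
      intro s
      simp [hig_def, huu_def, Matrix.mulVec_smul]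
    calc Y (c • w) = ∫ s in (0:ℝ)..1, c • ig w s :=
          intervalIntegral.integral_congr fun s _ => h1 s
      _ = c • Y w := intervalIntegral.integral_smul c _
  set Lm : (Fin r → ℝ) →ₗ[ℝ] (Fin r → ℝ) :=
    { toFun := fun w => F *ᵥ Y w
      map_add' := fun w w' => by
        show F *ᵥ Y (w + w') = F *ᵥ Y w + F *ᵥ Y w'
        rw [hYadd, Matrix.mulVec_add]
      map_smul' := fun c w => by
        show F *ᵥ Y (c • w) = c • (F *ᵥ Y w)
        rw [hYsmul, Matrix.mulVec_smul] } with hLm_def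
  -- injectivity of Lm
  have hinj : Function.Injective Lm := by
    rw [← LinearMap.ker_eq_bot, LinearMap.ker_eq_bot']
    intro w hw
    set v : Fin n → ℝ := Fᵀ *ᵥ w with hv_def
    have hT : ∀ s : ℝ, (NormedSpace.exp (((1:ℝ) - s) • A))ᵀ
        = NormedSpace.exp (((1:ℝ) - s) • Aᵀ) := by
      intro s
      rw [← Matrix.transpose_smul, Matrix.exp_transpose]
    have hdot : ∀ s : ℝ, v ⬝ᵥ ig w s = uu w s ⬝ᵥ uu w s := by
      intro s
      have h1 : v ᵥ* (NormedSpace.exp (((1:ℝ) - s) • A) * B) = uu w s := by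
        rw [← Matrix.mulVec_transpose, Matrix.transpose_mul, hT s,
          ← Matrix.mulVec_mulVec]
      show v ⬝ᵥ ((NormedSpace.exp (((1:ℝ) - s) • A) * B) *ᵥ uu w s) = _
      rw [Matrix.dotProduct_mulVec, h1]
    -- the integral of the squared norm vanishes
    let d : (Fin n → ℝ) →L[ℝ] ℝ := LinearMap.toContinuousLinearMap
      { toFun := fun x : Fin n → ℝ => v ⬝ᵥ x
        map_add' := fun a b => dotProduct_add v a b
        map_smul' := fun c a => by
          simp [dotProduct_smul, smul_eq_mul] }
    have h3 : v ⬝ᵥ Y w = 0 := by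
      have hLw : F *ᵥ Y w = 0 := hw
      have h2 : w ⬝ᵥ (F *ᵥ Y w) = 0 := by rw [hLw, dotProduct_zero]
      rw [hv_def, Matrix.mulVec_transpose, ← Matrix.dotProduct_mulVec]
      exact h2
    have hzero_int : (0:ℝ) = ∫ s in (0:ℝ)..1, uu w s ⬝ᵥ uu w s := by
      have hchain : v ⬝ᵥ Y w = ∫ s in (0:ℝ)..1, uu w s ⬝ᵥ uu w s :=
        calc v ⬝ᵥ Y w = d (Y w) := rfl
          _ = ∫ s in (0:ℝ)..1, d (ig w s) :=
            (d.intervalIntegral_comp_comm (hii w)).symm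
          _ = ∫ s in (0:ℝ)..1, uu w s ⬝ᵥ uu w s :=
            intervalIntegral.integral_congr fun s _ => hdot s
      rw [← hchain, h3]
    have hcont_f : Continuous fun s : ℝ => uu w s ⬝ᵥ uu w s := by
      simp only [dotProduct]
      exact continuous_finset_sum _ fun j _ =>
        ((continuous_apply j).comp (huu w)).mul ((continuous_apply j).comp (huu w))
    have hnn : ∀ s : ℝ, 0 ≤ uu w s ⬝ᵥ uu w s :=
      fun s => Finset.sum_nonneg fun j _ => mul_self_nonneg _
    have hzero : ∀ s ∈ Set.Icc (0:ℝ) 1, uu w s = 0 := by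
      intro s hs
      by_contra hne
      have hpos : 0 < uu w s ⬝ᵥ uu w s :=
        lt_of_le_of_ne (hnn s) fun h => hne (dotProduct_self_eq_zero.mp h.symm)
      have h := intervalIntegral.integral_pos (by norm_num)
        (hcont_f.continuousOn) (fun x _ => hnn x) ⟨s, hs, hpos⟩
      rw [← hzero_int] at h
      exact lt_irrefl 0 h
    have hφ : ∀ k : ℕ, ∀ τ ∈ Set.Icc (0:ℝ) 1,
        Bᵀ *ᵥ ((Aᵀ ^ k * NormedSpace.exp (τ • Aᵀ)) *ᵥ v) = 0 := by
      intro k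
      induction k with
      | zero =>
        intro τ hτ
        have hs : (1:ℝ) - τ ∈ Set.Icc (0:ℝ) 1 :=
          ⟨by linarith [hτ.2], by linarith [hτ.1]⟩
        have h := hzero ((1:ℝ) - τ) hs
        rw [pow_zero, one_mul]
        rw [huu_def] at h
        simp only [show (1:ℝ) - ((1:ℝ) - τ) = τ by ring] at h
        exact h
      | succ k ih =>
        have hIoo : ∀ τ ∈ Set.Ioo (0:ℝ) 1,
            Bᵀ *ᵥ ((Aᵀ ^ (k + 1) * NormedSpace.exp (τ • Aᵀ)) *ᵥ v) = 0 := by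
          intro τ hτ
          have hd := exp_deriv_aux Aᵀ Bᵀ v k τ
          have heq : (fun τ : ℝ => Bᵀ *ᵥ ((Aᵀ ^ k * NormedSpace.exp (τ • Aᵀ)) *ᵥ v))
              =ᶠ[nhds τ] fun _ => (0 : Fin p → ℝ) :=
            Filter.eventuallyEq_of_mem (isOpen_Ioo.mem_nhds hτ)
              fun x hx => ih x (Set.Ioo_subset_Icc_self hx)
          have hd0 : HasDerivAt
              (fun τ : ℝ => Bᵀ *ᵥ ((Aᵀ ^ k * NormedSpace.exp (τ • Aᵀ)) *ᵥ v))
              0 τ :=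
            (hasDerivAt_const τ (0 : Fin p → ℝ)).congr_of_eventuallyEq heq
          exact hd.unique hd0
        have hclo : Set.EqOn
            (fun τ : ℝ => Bᵀ *ᵥ ((Aᵀ ^ (k + 1) * NormedSpace.exp (τ • Aᵀ)) *ᵥ v))
            (fun _ => (0 : Fin p → ℝ)) (closure (Set.Ioo (0:ℝ) 1)) :=
          Set.EqOn.closure (fun x hx => hIoo x hx) (hφcont (k + 1) v) continuous_const
        intro τ hτ
        have hmem : τ ∈ closure (Set.Ioo (0:ℝ) 1) := by
          rw [closure_Ioo (by norm_num : (0:ℝ) ≠ 1)]; exact hτ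
        exact hclo hmem
    have hk0 : ∀ k : ℕ, (A ^ k * B)ᵀ *ᵥ v = 0 := by
      intro k
      have h := hφ k 0 (by constructor <;> norm_num)
      rw [zero_smul, NormedSpace.exp_zero, mul_one] at h
      rw [Matrix.transpose_mul, Matrix.transpose_pow, ← Matrix.mulVec_mulVec]
      exact h
    have hN : (F * 𝒞)ᵀ *ᵥ w = 0 := by
      rw [Matrix.transpose_mul, ← Matrix.mulVec_mulVec, ← hv_def]
      funext kj
      obtain ⟨k, j⟩ := kj
      have h := congrFun (hk0 (k : ℕ)) j
      simp only [Matrix.mulVec, dotProduct, Matrix.transpose_apply,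
        Pi.zero_apply] at h ⊢
      rw [← h]
      apply Finset.sum_congr rfl
      intro i _
      rw [h𝒞]
      simp [Matrix.of_apply]
    have hrk : ((F * 𝒞)ᵀ).rank = r := by
      rw [Matrix.rank_transpose, hrank, hF]
    have hker : LinearMap.ker ((F * 𝒞)ᵀ).mulVecLin = ⊥ := by
      have h1 := LinearMap.finrank_range_add_finrank_ker ((F * 𝒞)ᵀ).mulVecLin
      rw [Module.finrank_fin_fun] at h1
      have h2 : Module.finrank ℝ (LinearMap.range ((F * 𝒞)ᵀ).mulVecLin) = r := hrk
      rw [h2] at h1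
      have h3 : Module.finrank ℝ (LinearMap.ker ((F * 𝒞)ᵀ).mulVecLin) = 0 := by omega
      exact Submodule.finrank_eq_zero.mp h3
    have hwker : w ∈ LinearMap.ker ((F * 𝒞)ᵀ).mulVecLin := by
      rw [LinearMap.mem_ker, Matrix.mulVecLin_apply]
      exact hN
    rw [hker] at hwker
    simpa using hwker
  have hsurj : Function.Surjective Lm := LinearMap.injective_iff_surjective.mp hinj
  obtain ⟨w, hwz⟩ := hsurj (zstar - F *ᵥ (NormedSpace.exp ((1:ℝ) • A) *ᵥ x0))
  refine ⟨1, one_pos, uu w, huu w,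
    NormedSpace.exp ((1:ℝ) • A) *ᵥ x0 + Y w, rfl, ?_⟩
  rw [Matrix.mulVec_add]
  have hLw : F *ᵥ Y w = Lm w := rfl
  rw [hLw, hwz]
  exact add_sub_cancel _ _
end
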